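/- Fix Z ∈ 𝒫(ℚ). The map U_Z : Hom_Γ(Ξ₀, V) → H¹(Γ, V) sending Ψ to the class of the 1-cocycle γ ↦ Ψ([Z, γ⁻¹·Z]) is surjective. Moreover, for any r ∈ P¹(ℚ), the image of the map Hom_Γ(Δ₀, V) → H¹(Γ, V) sending Φ to the class of the 1-cocycle γ ↦ Φ({γ⁻¹·r} − {r}) equals the parabolic cohomology H¹_par(Γ, V), defined as the kernel of the restriction map H¹(Γ, V) → ∏_{s ∈ C(Γ)} H¹(Stab_Γ(s), V), where C(Γ) is a set of representatives of the Γ-orbits of P¹(ℚ). -/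

import Mathlib

noncomputable section

open scoped MatrixGroups

/-- The projective line over `ℚ`, i.e. `P¹(ℚ)`. -/
abbrev P1 : Type := Projectivization ℚ (Fin 2 → ℚ)

namespace PaperMS

/-- The linear automorphism of `ℚ²` attached to `γ ∈ GL₂(ℚ)`. -/
def glEquiv (γ : GL (Fin 2) ℚ) : (Fin 2 → ℚ) ≃ₗ[ℚ] (Fin 2 → ℚ) :=
  LinearMap.GeneralLinearGroup.generalLinearEquiv ℚ (Fin 2 → ℚ)
    (Matrix.GeneralLinearGroup.toLin γ)

lemma glEquiv_one : glEquiv 1 = LinearEquiv.refl ℚ (Fin 2 → ℚ) := by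
  simp only [glEquiv, map_one]
  rfl

lemma glEquiv_mul (γ δ : GL (Fin 2) ℚ) :
    glEquiv (γ * δ) = (glEquiv δ).trans (glEquiv γ) := by
  simp only [glEquiv, map_mul]
  rfl

/-- The Möbius action of `GL₂(ℚ)` on `P¹(ℚ)`. -/
instance : MulAction (GL (Fin 2) ℚ) P1 where
  smul γ := Projectivization.map (glEquiv γ).toLinearMap (glEquiv γ).injective
  one_smul x := by
    induction x using Projectivization.ind with
    | h v hv =>
      show Projectivization.map _ _ _ = _
      rw [Projectivization.map_mk]
      simp [glEquiv_one]
  mul_smul γ δ x := by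
    induction x using Projectivization.ind with
    | h v hv =>
      show Projectivization.map _ _ _ =
        Projectivization.map _ _ (Projectivization.map _ _ _)
      rw [Projectivization.map_mk, Projectivization.map_mk, Projectivization.map_mk]
      simp [glEquiv_mul]

lemma smul_P1_def (γ : GL (Fin 2) ℚ) (x : P1) :
    γ • x = Projectivization.map (glEquiv γ).toLinearMap (glEquiv γ).injective x := rfl

/-- The point of `P¹(ℚ)` attached to a rational number. -/
def ptQ (x : ℚ) : P1 :=
  Projectivization.mk ℚ ![x, 1] (by
    intro h
    have := congrFun h 1
    simp at this)

/-- The point `∞` of `P¹(ℚ)`. -/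
def ptInf : P1 :=
  Projectivization.mk ℚ ![1, 0] (by
    intro h
    have := congrFun h 0
    simp at this)

lemma ptQ_ne_ptInf (x : ℚ) : ptQ x ≠ ptInf := by
  intro h
  rw [ptQ, ptInf, Projectivization.mk_eq_mk_iff] at h
  obtain ⟨a, ha⟩ := h
  have := congrFun ha 1
  simp at this

/-- The set `𝒫(ℚ)` of infinitesimal cusps `π_r(s)`: ordered pairs of distinct
points of `P¹(ℚ)`; the symbol `π_r(s)` corresponds to the pair `(r, s)`. -/
def PP : Type := {p : P1 × P1 // p.1 ≠ p.2}

/-- The infinitesimal cusp `π_r(s)`. -/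
def pi' (r s : P1) (h : r ≠ s) : PP := ⟨(r, s), h⟩

instance : MulAction (GL (Fin 2) ℚ) PP where
  smul γ p := ⟨(γ • p.val.1, γ • p.val.2), fun h => p.prop (MulAction.injective γ h)⟩
  one_smul p := by
    apply Subtype.ext
    show (((1 : GL (Fin 2) ℚ) • p.val.1, (1 : GL (Fin 2) ℚ) • p.val.2) : P1 × P1) = p.val
    simp
  mul_smul γ δ p := by
    apply Subtype.ext
    show ((((γ * δ) : GL (Fin 2) ℚ) • p.val.1, ((γ * δ) : GL (Fin 2) ℚ) • p.val.2) : P1 × P1) = _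
    simp [mul_smul]
    rfl

/-- `Ξ`, the group of divisors on `𝒫(ℚ)`. -/
abbrev Xi : Type := PP →₀ ℤ

/-- `Δ`, the group of divisors on `P¹(ℚ)`. -/
abbrev Delta : Type := P1 →₀ ℤ

/-- `GL₂(ℚ)` acts on divisors on `𝒫(ℚ)`. -/
instance : MulAction (GL (Fin 2) ℚ) Xi where
  smul γ v := Finsupp.mapDomain (γ • ·) v
  one_smul v := by
    show Finsupp.mapDomain _ _ = _
    simp only [one_smul]
    exact Finsupp.mapDomain_id
  mul_smul γ δ v := by
    show Finsupp.mapDomain _ _ = Finsupp.mapDomain _ (Finsupp.mapDomain _ _)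
    rw [← Finsupp.mapDomain_comp]
    congr 1
    funext x
    simp [mul_smul]

/-- `GL₂(ℚ)` acts on divisors on `P¹(ℚ)`. -/
instance : MulAction (GL (Fin 2) ℚ) Delta where
  smul γ v := Finsupp.mapDomain (γ • ·) v
  one_smul v := by
    show Finsupp.mapDomain _ _ = _
    simp only [one_smul]
    exact Finsupp.mapDomain_id
  mul_smul γ δ v := by
    show Finsupp.mapDomain _ _ = Finsupp.mapDomain _ (Finsupp.mapDomain _ _)
    rw [← Finsupp.mapDomain_comp]
    congr 1
    funext x
    simp [mul_smul]

/-- The degree of a divisor on `𝒫(ℚ)`. -/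
def degXi : Xi →+ ℤ := Finsupp.liftAddHom fun _ => AddMonoidHom.id ℤ

/-- The degree of a divisor on `P¹(ℚ)`. -/
def degDelta : Delta →+ ℤ := Finsupp.liftAddHom fun _ => AddMonoidHom.id ℤ

/-- `Ξ₀`, the subgroup of degree-zero divisors on `𝒫(ℚ)`. -/
def Xi0 : AddSubgroup Xi := degXi.ker

/-- `Δ₀`, the subgroup of degree-zero divisors on `P¹(ℚ)`. -/
def Delta0 : AddSubgroup Delta := degDelta.ker

/-- The divisor attached to a point of `𝒫(ℚ)`. -/
def dv (p : PP) : Xi := Finsupp.single p 1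

/-- The divisor attached to a point of `P¹(ℚ)`. -/
def dvP (r : P1) : Delta := Finsupp.single r 1

/-- `[c₁, c₂] = {c₂} - {c₁} ∈ Ξ₀`. -/
def br (c₁ c₂ : PP) : Xi := dv c₂ - dv c₁

/-- The modular symbol `{r, s} = [π_r(s), π_s(r)]`. -/
def msym (r s : P1) (h : r ≠ s) : Xi := br (pi' r s h) (pi' s r h.symm)

/-- The infinitesimal symbol `[s, t]_r = [π_r(s), π_r(t)]`. -/
def isym (r s t : P1) (hs : s ≠ r) (ht : t ≠ r) : Xi :=
  br (pi' r s hs.symm) (pi' r t ht.symm)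

lemma degXi_single (p : PP) (n : ℤ) : degXi (Finsupp.single p n) = n := by
  simp [degXi]

lemma degDelta_single (r : P1) (n : ℤ) : degDelta (Finsupp.single r n) = n := by
  simp [degDelta]

lemma br_mem_Xi0 (c₁ c₂ : PP) : br c₁ c₂ ∈ Xi0 := by
  simp [br, Xi0, AddMonoidHom.mem_ker, dv, degXi_single]

lemma smul_mem_Xi0 (γ : GL (Fin 2) ℚ) {v : Xi} (hv : v ∈ Xi0) : γ • v ∈ Xi0 := by
  have h : degXi (γ • v) = degXi v := by
    show degXi (Finsupp.mapDomain (γ • ·) v) = degXi v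
    simp only [degXi, Finsupp.liftAddHom_apply]
    exact Finsupp.sum_mapDomain_index (fun _ => rfl) (fun _ _ _ => rfl)
  simpa [Xi0, AddMonoidHom.mem_ker, h] using hv

lemma smul_mem_Delta0 (γ : GL (Fin 2) ℚ) {v : Delta} (hv : v ∈ Delta0) : γ • v ∈ Delta0 := by
  have h : degDelta (γ • v) = degDelta v := by
    show degDelta (Finsupp.mapDomain (γ • ·) v) = degDelta v
    simp only [degDelta, Finsupp.liftAddHom_apply]
    exact Finsupp.sum_mapDomain_index (fun _ => rfl) (fun _ _ _ => rfl)
  simpa [Delta0, AddMonoidHom.mem_ker, h] using hv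

lemma brP_mem_Delta0 (r s : P1) : dvP s - dvP r ∈ Delta0 := by
  simp [Delta0, AddMonoidHom.mem_ker, dvP, degDelta_single]

/-- The boundary map `∂ : Ξ → Δ`, induced by `π_r(s) ↦ r`. -/
def bdry : Xi →+ Delta := Finsupp.mapDomain.addMonoidHom fun p : PP => p.val.1

/-- The embedding of `SL₂(ℤ)` in `GL₂(ℚ)`. -/
def toGLQ : SL(2, ℤ) →* GL (Fin 2) ℚ :=
  Matrix.SpecialLinearGroup.toGL.comp (Matrix.SpecialLinearGroup.map (Int.castRingHom ℚ))

end PaperMS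


namespace PaperMS

/-! ### Auxiliary lemmas -/

lemma rat_root' (a b : ℚ) (t : ℤ) (hab : a * b = 1) (hs : a + b = (t : ℚ)) :
    (a = 1 ∧ b = 1) ∨ (a = -1 ∧ b = -1) := by
  have hden : ((a.den : ℚ)) ≠ 0 := by exact_mod_cast a.den_ne_zero
  have hnum : (a.num : ℚ) = a * a.den := by
    exact (div_eq_iff hden).mp (Rat.num_div_den a)
  have hq : a * a - t * a + 1 = 0 := by
    have hb : b = t - a := by linarith
    rw [hb] at hab; linear_combination -hab
  have key : a.num ^ 2 - t * a.num * (a.den : ℤ) + (a.den : ℤ) ^ 2 = 0 := by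
    have : ((a.num : ℚ)) ^ 2 - (t : ℚ) * a.num * (a.den : ℚ) + ((a.den : ℚ)) ^ 2
        = (a * a - t * a + 1) * (a.den : ℚ) ^ 2 := by rw [hnum]; ring
    rw [hq, zero_mul] at this
    exact_mod_cast this
  have hdvd : (a.den : ℤ) ∣ a.num ^ 2 := ⟨t * a.num - a.den, by linarith [key]⟩
  have hden1 : a.den = 1 := by
    have h1 : a.den ∣ a.num.natAbs ^ 2 := by
      have := Int.natAbs_dvd_natAbs.mpr hdvd
      simpa [Int.natAbs_pow] using this
    exact (Nat.Coprime.pow_right 2 a.reduced.symm).eq_one_of_dvd h1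
  have haint : a = (a.num : ℚ) := by
    rw [← Rat.num_div_den a, hden1]; simp
  have hbint : b = ((t - a.num : ℤ) : ℚ) := by push_cast; rw [← haint]; linarith
  have hmul : a.num * (t - a.num) = 1 := by
    have : ((a.num * (t - a.num) : ℤ) : ℚ) = ((1 : ℤ) : ℚ) := by
      push_cast; rw [← haint]; linear_combination hab - a * hs
    exact_mod_cast this
  rcases Int.mul_eq_one_iff_eq_one_or_neg_one.mp hmul with ⟨h1, h2⟩ | ⟨h1, h2⟩
  · left; exact ⟨by rw [haint, h1]; norm_num, by rw [hbint, h2]; norm_num⟩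
  · right; exact ⟨by rw [haint, h1]; norm_num, by rw [hbint, h2]; norm_num⟩

lemma glEquiv_toGLQ (γ : SL(2, ℤ)) :
    (glEquiv (toGLQ γ)).toLinearMap
      = Matrix.toLin' ((γ : Matrix (Fin 2) (Fin 2) ℤ).map (Int.cast : ℤ → ℚ)) := by
  rw [glEquiv, LinearMap.GeneralLinearGroup.generalLinearEquiv_to_linearMap]
  exact Matrix.GeneralLinearGroup.coe_toLin _

/-- An element of `SL₂(ℤ)` fixing two distinct points of `P¹(ℚ)` is `±1`. -/
lemma eq_one_or_neg_one_of_fixes_two (γ : SL(2, ℤ)) {x y : P1} (hxy : x ≠ y)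
    (hx : toGLQ γ • x = x) (hy : toGLQ γ • y = y) : γ = 1 ∨ γ = -1 := by
  set E := (glEquiv (toGLQ γ)).toLinearMap with hE
  set v := x.rep with hv'
  set w := y.rep with hw'
  have hv : v ≠ 0 := x.rep_nonzero
  have hw : w ≠ 0 := y.rep_nonzero
  have hmkv : Projectivization.mk ℚ v hv = x := x.mk_rep
  have hmkw : Projectivization.mk ℚ w hw = y := y.mk_rep
  have hxv : toGLQ γ • x
      = Projectivization.mk ℚ (E v) ((glEquiv (toGLQ γ)).map_ne_zero_iff.mpr hv) := by
    rw [← hmkv, smul_P1_def, Projectivization.map_mk]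
  have hyw : toGLQ γ • y
      = Projectivization.mk ℚ (E w) ((glEquiv (toGLQ γ)).map_ne_zero_iff.mpr hw) := by
    rw [← hmkw, smul_P1_def, Projectivization.map_mk]
  rw [hxv, ← hmkv, Projectivization.mk_eq_mk_iff'] at hx
  rw [hyw, ← hmkw, Projectivization.mk_eq_mk_iff'] at hy
  obtain ⟨a, ha⟩ := hx
  obtain ⟨b, hb⟩ := hy
  have hEv : E v = a • v := ha.symm
  have hEw : E w = b • w := hb.symm
  have hne : Projectivization.mk ℚ v hv ≠ Projectivization.mk ℚ w hw := by
    rw [hmkv, hmkw]; exact hxy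
  have li : LinearIndependent ℚ ![v, w] := by
    rw [LinearIndependent.pair_iff]
    intro s t hst
    have ht : t = 0 := by
      by_contra ht
      have h2 : t • w = (-s) • v := by
        rw [neg_smul]
        exact eq_neg_of_add_eq_zero_right hst
      have h1 : (-(t⁻¹ * s)) • v = w := by
        calc (-(t⁻¹ * s)) • v = t⁻¹ • ((-s) • v) := by
              rw [smul_smul]; ring_nf
          _ = t⁻¹ • (t • w) := by rw [h2]
          _ = w := by rw [smul_smul, inv_mul_cancel₀ ht, one_smul]
      exact hne.symm ((Projectivization.mk_eq_mk_iff' ℚ w v hw hv).mpr ⟨_, h1⟩)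
    subst ht
    have hs : s = 0 := by
      have hsv : s • v = 0 := by simpa using hst
      rcases smul_eq_zero.mp hsv with h | h
      · exact h
      · exact absurd h hv
    exact ⟨hs, rfl⟩
  have card_eq : Fintype.card (Fin 2) = Module.finrank ℚ (Fin 2 → ℚ) := by simp
  set B := basisOfLinearIndependentOfCardEqFinrank li card_eq with hBdef
  have hB : ⇑B = ![v, w] := coe_basisOfLinearIndependentOfCardEqFinrank li card_eq
  have hB0 : B 0 = v := by rw [hB]; rfl
  have hB1 : B 1 = w := by rw [hB]; rfl
  set M := ((γ : Matrix (Fin 2) (Fin 2) ℤ).map (Int.cast : ℤ → ℚ)) with hM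
  have hEM : E = Matrix.toLin' M := glEquiv_toGLQ γ
  have htr : LinearMap.trace ℚ _ E
      = ((Matrix.trace (γ : Matrix (Fin 2) (Fin 2) ℤ) : ℤ) : ℚ) := by
    rw [hEM, LinearMap.trace_eq_matrix_trace ℚ (Pi.basisFun ℚ (Fin 2)),
      LinearMap.toMatrix_eq_toMatrix', LinearMap.toMatrix'_toLin']
    have h := AddMonoidHom.map_trace (Int.castRingHom ℚ : ℤ →+* ℚ)
      (γ : Matrix (Fin 2) (Fin 2) ℤ)
    rw [hM]
    simpa [Matrix.map] using h.symm
  have hdet : LinearMap.det E = 1 := by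
    rw [hEM, LinearMap.det_toLin', hM,
      show ((γ : Matrix (Fin 2) (Fin 2) ℤ).map (Int.cast : ℤ → ℚ)).det
          = (((γ : Matrix (Fin 2) (Fin 2) ℤ).det : ℤ) : ℚ) from
        (RingHom.map_det (Int.castRingHom ℚ) _).symm]
    rw [γ.det_coe]
    norm_num
  have hEB0 : E (B 0) = a • B 0 := by rw [hB0, hEv]
  have hEB1 : E (B 1) = b • B 1 := by rw [hB1, hEw]
  have hMB : ∀ i j, LinearMap.toMatrix B B E i j
      = (![a, b] j) * (if i = j then 1 else 0) := by
    intro i j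
    rw [LinearMap.toMatrix_apply]
    fin_cases j <;>
      simp [hEB0, hEB1, Module.Basis.repr_self, Finsupp.single_apply] <;>
      fin_cases i <;> simp
  have htr2 : LinearMap.trace ℚ _ E = a + b := by
    rw [LinearMap.trace_eq_matrix_trace ℚ B, Matrix.trace_fin_two, hMB, hMB]
    simp
  have hdet2 : LinearMap.det E = a * b := by
    rw [← LinearMap.det_toMatrix B, Matrix.det_fin_two, hMB, hMB, hMB, hMB]
    simp
  have h1 : a * b = 1 := by rw [← hdet2, hdet]
  have h2 : a + b = ((Matrix.trace (γ : Matrix (Fin 2) (Fin 2) ℤ) : ℤ) : ℚ) := by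
    rw [← htr2, htr]
  rcases rat_root' a b _ h1 h2 with ⟨ha1, hb1⟩ | ⟨ha1, hb1⟩
  · left
    have hEid : E = LinearMap.id := by
      apply B.ext
      intro i
      fin_cases i
      · show E (B 0) = B 0
        rw [hB0, hEv, ha1, one_smul]
      · show E (B 1) = B 1
        rw [hB1, hEw, hb1, one_smul]
    have hM1 : M = 1 := by
      apply Matrix.toLin'.injective
      rw [← hEM, hEid, Matrix.toLin'_one]
    apply Matrix.SpecialLinearGroup.ext
    intro i j
    have hij := congrFun (congrFun (congrArg (fun (m : Matrix (Fin 2) (Fin 2) ℚ) => (m : Fin 2 → Fin 2 → ℚ)) hM1) i) j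
    rw [hM] at hij
    simp only [Matrix.map_apply] at hij
    have : ((γ : Matrix (Fin 2) (Fin 2) ℤ) i j : ℚ)
        = (((1 : Matrix (Fin 2) (Fin 2) ℤ) i j : ℤ) : ℚ) := by
      rw [hij]
      by_cases h : i = j <;> simp [Matrix.one_apply, h]
    rw [Matrix.SpecialLinearGroup.coe_one]
    exact_mod_cast this
  · right
    have hEid : E = -LinearMap.id := by
      apply B.ext
      intro i
      fin_cases i
      · show E (B 0) = -(B 0)
        rw [hB0, hEv, ha1, neg_smul, one_smul]
      · show E (B 1) = -(B 1)
        rw [hB1, hEw, hb1, neg_smul, one_smul]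
    have hM1 : M = -1 := by
      apply Matrix.toLin'.injective
      rw [← hEM, hEid, map_neg, Matrix.toLin'_one]
    apply Matrix.SpecialLinearGroup.ext
    intro i j
    have hij := congrFun (congrFun (congrArg (fun (m : Matrix (Fin 2) (Fin 2) ℚ) => (m : Fin 2 → Fin 2 → ℚ)) hM1) i) j
    rw [hM] at hij
    simp only [Matrix.map_apply] at hij
    have : ((γ : Matrix (Fin 2) (Fin 2) ℤ) i j : ℚ)
        = (((-1 : Matrix (Fin 2) (Fin 2) ℤ) i j : ℤ) : ℚ) := by
      rw [hij]
      by_cases h : i = j <;> simp [Matrix.one_apply, h]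
    have hcoe : ((-1 : SL(2, ℤ)) : Matrix (Fin 2) (Fin 2) ℤ) = -1 := rfl
    rw [hcoe]
    exact_mod_cast this

lemma existsG {X : Type*} [MulAction (GL (Fin 2) ℚ) X]
    (Γ : Subgroup SL(2, ℤ)) {V : Type*} [AddCommGroup V] [Module ℚ V]
    (act : SL(2, ℤ) → V →ₗ[ℚ] V)
    (hact_mul : ∀ γ δ : SL(2, ℤ), act (γ * δ) = (act δ).comp (act γ))
    (c : Γ → V)
    (hc : ∀ γ δ : Γ, c (γ * δ) = act (δ : SL(2, ℤ)) (c γ) + c δ)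
    (C : Set X)
    (hsurj : ∀ s : X, ∃ t ∈ C, ∃ γ ∈ Γ, toGLQ γ • t = s)
    (hinj : ∀ t₁ ∈ C, ∀ t₂ ∈ C, (∃ γ ∈ Γ, toGLQ γ • t₁ = t₂) → t₁ = t₂)
    (hv : ∀ t ∈ C, ∃ v : V, ∀ γ : Γ, toGLQ (γ : SL(2, ℤ)) • t = t →
      c γ = act (γ : SL(2, ℤ)) v - v) :
    ∃ g : X → V, ∀ (δ : Γ) (s : X),
      g (toGLQ (δ : SL(2, ℤ)) • s) = act ((δ : SL(2, ℤ))⁻¹) (g s) + c δ⁻¹ := by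
  classical
  have hv' : ∀ x : X, ∃ v : V, x ∈ C → ∀ γ : Γ, toGLQ (γ : SL(2, ℤ)) • x = x →
      c γ = act (γ : SL(2, ℤ)) v - v := by
    intro x
    by_cases h : x ∈ C
    · obtain ⟨v, hvv⟩ := hv x h
      exact ⟨v, fun _ => hvv⟩
    · exact ⟨0, fun h' => absurd h' h⟩
  choose wv hwv using hv'
  choose t ht sg hsg hts using hsurj
  refine ⟨fun s => c (⟨sg s, hsg s⟩ : Γ)⁻¹ - act ((sg s : SL(2, ℤ)))⁻¹ (wv (t s)), ?_⟩
  intro δ s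
  set s' := toGLQ (δ : SL(2, ℤ)) • s with hs'
  set σ : Γ := ⟨sg s, hsg s⟩ with hσdef
  set σ' : Γ := ⟨sg s', hsg s'⟩ with hσ'def
  set τ : Γ := σ⁻¹ * δ⁻¹ * σ' with hτdef
  have hts'' : t s' = t s := by
    apply hinj _ (ht s') _ (ht s)
    refine ⟨(sg s)⁻¹ * (δ : SL(2, ℤ))⁻¹ * sg s', ?_, ?_⟩
    · exact mul_mem (mul_mem (inv_mem (hsg s)) (inv_mem δ.2)) (hsg s')
    · rw [map_mul, map_mul, mul_smul, mul_smul, hts s', hs', map_inv, map_inv,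
        inv_smul_smul]
      exact inv_smul_eq_iff.mpr (hts s).symm
  have hτstab : toGLQ ((τ : SL(2, ℤ))) • t s = t s := by
    have hτcoe : (τ : SL(2, ℤ)) = (sg s)⁻¹ * ((δ : SL(2, ℤ))⁻¹ * sg s') := by
      rw [hτdef]
      push_cast
      group
      rfl
    have e1 : toGLQ (sg s') • t s = s' := by rw [← hts'']; exact hts s'
    rw [hτcoe, map_mul, map_mul, mul_smul, mul_smul, e1, hs', map_inv, map_inv,
      inv_smul_smul]
    exact inv_smul_eq_iff.mpr (hts s).symm
  have hτstab' : toGLQ ((τ⁻¹ : Γ) : SL(2, ℤ)) • t s = t s := by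
    have := congrArg (fun z => toGLQ ((τ⁻¹ : Γ) : SL(2, ℤ)) • z) hτstab
    simpa [← mul_smul, ← map_mul, ← MulMemClass.coe_mul] using this.symm
  set W := wv (t s) with hWdef
  have hcτ : c τ⁻¹ = act ((τ⁻¹ : Γ) : SL(2, ℤ)) W - W := hwv (t s) (ht s) τ⁻¹ hτstab'
  have hσ'eq : σ'⁻¹ = τ⁻¹ * (σ⁻¹ * δ⁻¹) := by rw [hτdef]; group
  have hcσ' : c σ'⁻¹ = act (((σ⁻¹ * δ⁻¹ : Γ)) : SL(2, ℤ)) (c τ⁻¹) + c (σ⁻¹ * δ⁻¹) := by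
    rw [hσ'eq]; exact hc τ⁻¹ (σ⁻¹ * δ⁻¹)
  have hcσδ : c (σ⁻¹ * δ⁻¹) = act ((δ⁻¹ : Γ) : SL(2, ℤ)) (c σ⁻¹) + c δ⁻¹ := hc σ⁻¹ δ⁻¹
  have hactW : act ((sg s' : SL(2, ℤ)))⁻¹ W
      = act (((σ⁻¹ * δ⁻¹ : Γ)) : SL(2, ℤ)) (act ((τ⁻¹ : Γ) : SL(2, ℤ)) W) := by
    have h1 : ((sg s' : SL(2, ℤ)))⁻¹ = ((τ⁻¹ : Γ) : SL(2, ℤ)) * (((σ⁻¹ * δ⁻¹ : Γ)) : SL(2, ℤ)) := by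
      have : (sg s' : SL(2, ℤ)) = ((σ' : Γ) : SL(2, ℤ)) := rfl
      rw [this, ← MulMemClass.coe_mul, ← hσ'eq]
      norm_cast
    rw [h1, hact_mul]
    rfl
  show c σ'⁻¹ - act ((sg s' : SL(2, ℤ)))⁻¹ (wv (t s')) = act ((δ : SL(2, ℤ))⁻¹)
    (c σ⁻¹ - act ((sg s : SL(2, ℤ)))⁻¹ W) + c δ⁻¹
  rw [hts'', ← hWdef, hcσ', hcσδ, hcτ, hactW, map_sub, map_sub]
  have hcomp : ∀ u : V, act (((σ⁻¹ * δ⁻¹ : Γ)) : SL(2, ℤ)) u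
      = act ((δ : SL(2, ℤ))⁻¹) (act ((sg s : SL(2, ℤ)))⁻¹ u) := by
    intro u
    have h2 : (((σ⁻¹ * δ⁻¹ : Γ)) : SL(2, ℤ)) = ((sg s : SL(2, ℤ)))⁻¹ * ((δ : SL(2, ℤ)))⁻¹ := by
      push_cast
      rfl
    rw [h2, hact_mul]
    rfl
  have hinvcoe : ((δ⁻¹ : Γ) : SL(2, ℤ)) = ((δ : SL(2, ℤ)))⁻¹ := rfl
  rw [hcomp, hcomp, hinvcoe]
  abel


/-- The additive map `X →₀ ℤ → V` induced by `g : X → V`. -/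
def liftG {X : Type*} {V : Type*} [AddCommGroup V] (g : X → V) : (X →₀ ℤ) →+ V :=
  Finsupp.liftAddHom fun p => zmultiplesHom V (g p)

lemma liftG_single {X : Type*} {V : Type*} [AddCommGroup V] (g : X → V) (p : X) :
    liftG g (Finsupp.single p 1) = g p := by
  rw [liftG, Finsupp.liftAddHom_apply_single]
  exact one_zsmul _

lemma liftG_equivariant {X : Type*} [MulAction (GL (Fin 2) ℚ) X]
    {Γ : Subgroup SL(2, ℤ)} {V : Type*} [AddCommGroup V] [Module ℚ V]
    (act : SL(2, ℤ) → V →ₗ[ℚ] V) (c : Γ → V)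
    (g : X → V) (γ : Γ)
    (hg : ∀ s : X, g (toGLQ (γ : SL(2, ℤ)) • s) = act ((γ : SL(2, ℤ))⁻¹) (g s) + c γ⁻¹)
    (x : X →₀ ℤ) :
    liftG g (Finsupp.mapDomain (toGLQ (γ : SL(2, ℤ)) • ·) x)
      = act ((γ : SL(2, ℤ))⁻¹) (liftG g x)
        + ((Finsupp.liftAddHom (fun _ => AddMonoidHom.id ℤ) : (X →₀ ℤ) →+ ℤ) x) • c γ⁻¹ := by
  induction x using Finsupp.induction_linear with
  | zero => simp
  | add f h hf hh =>
    rw [Finsupp.mapDomain_add, map_add, map_add, hf, hh, map_add, map_add, add_smul]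
    abel
  | single p n =>
    rw [Finsupp.mapDomain_single, liftG, Finsupp.liftAddHom_apply_single,
      Finsupp.liftAddHom_apply_single, Finsupp.liftAddHom_apply_single]
    simp only [zmultiplesHom_apply, AddMonoidHom.id_apply]
    rw [hg p, smul_add, map_zsmul]

lemma cocycle_one {Γ : Subgroup SL(2, ℤ)} {V : Type*} [AddCommGroup V] [Module ℚ V]
    {act : SL(2, ℤ) → V →ₗ[ℚ] V}
    (hact_one : act 1 = LinearMap.id)
    {c : Γ → V}
    (hc : ∀ γ δ : Γ, c (γ * δ) = act (δ : SL(2, ℤ)) (c γ) + c δ) :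
    c 1 = 0 := by
  have h := hc 1 1
  rw [mul_one, OneMemClass.coe_one, hact_one] at h
  have h2 : c 1 = c 1 + c 1 := by simpa using h
  exact (left_eq_add.mp h2)

lemma cocycle_pm_one {Γ : Subgroup SL(2, ℤ)} {V : Type*} [AddCommGroup V] [Module ℚ V]
    {act : SL(2, ℤ) → V →ₗ[ℚ] V}
    (hact_one : act 1 = LinearMap.id) (hact_neg : act (-1) = LinearMap.id)
    {c : Γ → V}
    (hc : ∀ γ δ : Γ, c (γ * δ) = act (δ : SL(2, ℤ)) (c γ) + c δ)
    (γ : Γ) (h : (γ : SL(2, ℤ)) = 1 ∨ (γ : SL(2, ℤ)) = -1) : c γ = 0 := by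
  rcases h with h | h
  · have : γ = 1 := Subtype.ext (by rw [h, OneMemClass.coe_one])
    rw [this]
    exact cocycle_one hact_one hc
  · have hγγ : γ * γ = 1 := Subtype.ext (by
      rw [MulMemClass.coe_mul, h, OneMemClass.coe_one, neg_mul_neg, one_mul])
    have h2 := hc γ γ
    rw [hγγ, cocycle_one hact_one hc, h, hact_neg] at h2
    have h3 : (2 : ℚ) • c γ = 0 := by
      rw [two_smul]
      simpa using h2.symm
    have h4 := congrArg (fun v : V => ((2 : ℚ)⁻¹) • v) h3
    simpa [smul_smul] using h4


lemma smul_sub_delta (γ : GL (Fin 2) ℚ) (a b : Delta) : γ • (a - b) = γ • a - γ • b := by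
  show Finsupp.mapDomain _ _ = Finsupp.mapDomain _ _ - Finsupp.mapDomain _ _
  exact map_sub (Finsupp.mapDomain.addMonoidHom _) a b

lemma smul_dvP (γ : GL (Fin 2) ℚ) (p : P1) : γ • dvP p = dvP (γ • p) := by
  show Finsupp.mapDomain _ _ = _
  rw [dvP, dvP, Finsupp.mapDomain_single]


/-- Let `Γ` be a congruence subgroup of `SL₂(ℤ)` and `V` a `ℚ`-vector
space with a right `SL₂(ℤ)`-action in which `-Id` acts trivially.  Fix `Z ∈ 𝒫(ℚ)` and
`r ∈ P¹(ℚ)`.  First, the map `U_Z : Hom_Γ(Ξ₀, V) → H¹(Γ, V)`, `Ψ ↦ [γ ↦ Ψ([Z, γ⁻¹·Z])]`,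
is surjective: every `1`-cocycle of `Γ` is cohomologous to the cocycle attached to some
`Ψ ∈ Hom_Γ(Ξ₀, V)`.  Second, the image in `H¹(Γ, V)` of `Hom_Γ(Δ₀, V)` (via
`Φ ↦ [γ ↦ Φ({γ⁻¹·r} - {r})]`) is exactly the parabolic cohomology `H¹_par(Γ, V)`: the
classes whose restriction to `Stab_Γ(s)` is trivial for every `s` in a set `C` of
representatives of the `Γ`-orbits of `P¹(ℚ)`. -/
theorem statement6 (Γ : Subgroup SL(2, ℤ))
    (hΓ : ∃ N : ℕ, 0 < N ∧ CongruenceSubgroup.Gamma N ≤ Γ)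
    (V : Type*) [AddCommGroup V] [Module ℚ V]
    (act : SL(2, ℤ) → V →ₗ[ℚ] V)
    (hact_one : act 1 = LinearMap.id)
    (hact_mul : ∀ γ δ : SL(2, ℤ), act (γ * δ) = (act δ).comp (act γ))
    (hact_neg : act (-1) = LinearMap.id)
    (Z : PP) (r : P1)
    (C : Set P1)
    (hC_surj : ∀ s : P1, ∃ t ∈ C, ∃ γ ∈ Γ, toGLQ γ • t = s)
    (hC_inj : ∀ t₁ ∈ C, ∀ t₂ ∈ C, (∃ γ ∈ Γ, toGLQ γ • t₁ = t₂) → t₁ = t₂) :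
    (∀ c : Γ → V, (∀ γ δ : Γ, c (γ * δ) = act (δ : SL(2, ℤ)) (c γ) + c δ) →
      ∃ Ψ : Xi0 →+ V,
        (∀ (γ : Γ) (x : Xi0),
            Ψ ⟨toGLQ (γ : SL(2, ℤ)) • (x : Xi), smul_mem_Xi0 _ x.prop⟩
              = act ((γ : SL(2, ℤ))⁻¹) (Ψ x)) ∧
        ∃ v : V, ∀ γ : Γ,
          Ψ ⟨br Z (toGLQ ((γ : SL(2, ℤ))⁻¹) • Z), br_mem_Xi0 _ _⟩
            = c γ + (act (γ : SL(2, ℤ)) v - v)) ∧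
    (∀ c : Γ → V, (∀ γ δ : Γ, c (γ * δ) = act (δ : SL(2, ℤ)) (c γ) + c δ) →
      ((∃ Φ : Delta0 →+ V,
          (∀ (γ : Γ) (x : Delta0),
              Φ ⟨toGLQ (γ : SL(2, ℤ)) • (x : Delta), smul_mem_Delta0 _ x.prop⟩
                = act ((γ : SL(2, ℤ))⁻¹) (Φ x)) ∧
          ∃ v : V, ∀ γ : Γ,
            Φ ⟨dvP (toGLQ ((γ : SL(2, ℤ))⁻¹) • r) - dvP r, brP_mem_Delta0 _ _⟩
              = c γ + (act (γ : SL(2, ℤ)) v - v)) ↔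
        (∀ s ∈ C, ∃ v : V, ∀ γ : Γ,
          toGLQ (γ : SL(2, ℤ)) • s = s → c γ = act (γ : SL(2, ℤ)) v - v))) := by
  constructor
  · -- Part 1 : surjectivity of `U_Z`
    intro c hc
    have equiv : Equivalence (fun x y : PP => ∃ γ ∈ Γ, toGLQ γ • x = y) := by
      constructor
      · intro x; exact ⟨1, Γ.one_mem, by rw [map_one, one_smul]⟩
      · rintro x y ⟨γ, hγ, hxy⟩
        exact ⟨γ⁻¹, inv_mem hγ, by rw [← hxy, map_inv, inv_smul_smul]⟩
      · rintro x y z ⟨γ, hγ, hxy⟩ ⟨δ, hδ, hyz⟩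
        exact ⟨δ * γ, mul_mem hδ hγ, by rw [map_mul, mul_smul, hxy, hyz]⟩
    let sd : Setoid PP := ⟨_, equiv⟩
    let C1 : Set PP := Set.range (fun q : Quotient sd => q.out)
    have hsurj : ∀ s : PP, ∃ t ∈ C1, ∃ γ ∈ Γ, toGLQ γ • t = s := by
      intro s
      exact ⟨(Quotient.mk sd s).out, ⟨_, rfl⟩, Quotient.mk_out (s := sd) s⟩
    have hinj : ∀ t₁ ∈ C1, ∀ t₂ ∈ C1, (∃ γ ∈ Γ, toGLQ γ • t₁ = t₂) → t₁ = t₂ := by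
      rintro t₁ ⟨q₁, rfl⟩ t₂ ⟨q₂, rfl⟩ hrel
      have hq : q₁ = q₂ := by
        rw [← Quotient.out_eq q₁, ← Quotient.out_eq q₂]
        exact Quotient.sound hrel
      rw [hq]
    have hv : ∀ t ∈ C1, ∃ v : V, ∀ γ : Γ, toGLQ (γ : SL(2, ℤ)) • t = t →
        c γ = act (γ : SL(2, ℤ)) v - v := by
      intro t _
      refine ⟨0, fun γ hγ => ?_⟩
      have h1 : toGLQ (γ : SL(2, ℤ)) • t.val.1 = t.val.1 := congrArg (fun p : PP => p.val.1) hγ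
      have h2 : toGLQ (γ : SL(2, ℤ)) • t.val.2 = t.val.2 := congrArg (fun p : PP => p.val.2) hγ
      have hpm := eq_one_or_neg_one_of_fixes_two (γ : SL(2, ℤ)) t.prop h1 h2
      rw [cocycle_pm_one hact_one hact_neg hc γ hpm]
      simp
    obtain ⟨g, hg⟩ := existsG Γ act hact_mul c hc C1 hsurj hinj hv
    refine ⟨(liftG g).comp Xi0.subtype, ?_, g Z, ?_⟩
    · intro γ x
      have key := liftG_equivariant act c g γ (fun s => hg γ s) (x : Xi)
      have hx0 : (Finsupp.liftAddHom (fun _ => AddMonoidHom.id ℤ) : (PP →₀ ℤ) →+ ℤ) (x : Xi)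
          = 0 := x.prop
      rw [hx0, zero_smul, add_zero] at key
      exact key
    · intro γ
      show liftG g (br Z (toGLQ ((γ : SL(2, ℤ))⁻¹) • Z)) = _
      rw [br, dv, dv, map_sub, liftG_single, liftG_single]
      have h := hg γ⁻¹ Z
      rw [show ((γ⁻¹ : Γ) : SL(2, ℤ)) = (γ : SL(2, ℤ))⁻¹ from rfl, inv_inv, inv_inv] at h
      rw [h]
      abel
  · -- Part 2 : parabolic cohomology
    intro c hc
    constructor
    · rintro ⟨Φ, hΦeq, v, hΦv⟩ s hs
      refine ⟨Φ ⟨dvP r - dvP s, brP_mem_Delta0 s r⟩ - v, ?_⟩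
      intro γ hγs
      have hγs' : toGLQ ((γ : SL(2, ℤ))⁻¹) • s = s := by
        rw [map_inv, inv_smul_eq_iff, hγs]
      have hmem : dvP r - dvP s ∈ Delta0 := brP_mem_Delta0 s r
      have hkey : (⟨dvP (toGLQ ((γ : SL(2, ℤ))⁻¹) • r) - dvP r,
            brP_mem_Delta0 _ _⟩ : Delta0)
          = ⟨toGLQ ((γ⁻¹ : Γ) : SL(2, ℤ)) • (dvP r - dvP s), smul_mem_Delta0 _ hmem⟩
            - ⟨dvP r - dvP s, hmem⟩ := by
        apply Subtype.ext
        show dvP (toGLQ ((γ : SL(2, ℤ))⁻¹) • r) - dvP r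
          = toGLQ ((γ⁻¹ : Γ) : SL(2, ℤ)) • (dvP r - dvP s) - (dvP r - dvP s)
        rw [smul_sub_delta, smul_dvP, smul_dvP,
          show ((γ⁻¹ : Γ) : SL(2, ℤ)) = (γ : SL(2, ℤ))⁻¹ from rfl, hγs']
        abel
      have hΦu := hΦeq γ⁻¹ ⟨dvP r - dvP s, hmem⟩
      have hval := hΦv γ
      rw [hkey, map_sub, hΦu] at hval
      simp only [InvMemClass.coe_inv, inv_inv] at hval
      have hres : c γ = (act (γ : SL(2, ℤ)) (Φ ⟨dvP r - dvP s, hmem⟩)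
            - Φ ⟨dvP r - dvP s, hmem⟩) - (act (γ : SL(2, ℤ)) v - v) := by
        rw [hval]
        abel
      rw [map_sub, hres]
      abel
    · intro hpar
      obtain ⟨g, hg⟩ := existsG Γ act hact_mul c hc C hC_surj hC_inj hpar
      refine ⟨(liftG g).comp Delta0.subtype, ?_, g r, ?_⟩
      · intro γ x
        have key := liftG_equivariant act c g γ (fun s => hg γ s) (x : Delta)
        have hx0 : (Finsupp.liftAddHom (fun _ => AddMonoidHom.id ℤ) : (P1 →₀ ℤ) →+ ℤ)
            (x : Delta) = 0 := x.prop
        rw [hx0, zero_smul, add_zero] at key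
        exact key
      · intro γ
        show liftG g (dvP (toGLQ ((γ : SL(2, ℤ))⁻¹) • r) - dvP r) = _
        rw [map_sub, dvP, dvP, liftG_single, liftG_single]
        have h := hg γ⁻¹ r
        rw [show ((γ⁻¹ : Γ) : SL(2, ℤ)) = (γ : SL(2, ℤ))⁻¹ from rfl, inv_inv, inv_inv] at h
        rw [h]
        abel


end PaperMS
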